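/- For N ≥ 1, if Θ is uniform on the circle and Θ̂ is uniform on the arc of length 2π/N (Voronoi cell of an N-point vector quantizer) containing Θ, then E[1 - cos(Θ̂ - Θ)] = 1 - (N·sin(π/N)/π)². -/

import Mathlib

open Real MeasureTheory

/-- For `N ≥ 1`: if `Θ` is uniform on the circle (`[0, 2π)`, density `1/(2π)`) and,
conditional on `Θ`, the reconstruction `Θ̂` is uniform (density `N/(2π)`) on the Voronoi
arc of length `2π/N` containing `Θ` (the arc centered at the nearest codebook angle
`(2π/N)⌊Θ N/(2π)⌉`), then `E[1 - cos (Θ̂ - Θ)] = 1 - (N sin(π/N)/π)²`. -/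
theorem stmt_14 (N : ℕ) (hN : 1 ≤ N) :
    (∫ θ in Set.Ico (0 : ℝ) (2 * π),
        (∫ θhat in Set.Ico
              ((2 * π / N) * (round (θ * N / (2 * π)) : ℝ) - π / N)
              ((2 * π / N) * (round (θ * N / (2 * π)) : ℝ) + π / N),
            (1 - Real.cos (θhat - θ)) * (N / (2 * π))) / (2 * π))
      = 1 - (N * Real.sin (π / N) / π) ^ 2 := by
  have hπ : (0:ℝ) < π := pi_pos
  have hN0 : (0:ℝ) < N := by exact_mod_cast hN.trans_lt' (by norm_num)
  have hNne : (N:ℝ) ≠ 0 := hN0.ne'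
  set F : ℝ → ℝ := fun θ => Real.cos ((2 * π / N) * (round (θ * N / (2 * π)) : ℝ) - θ) with hF
  -- inner integral
  have inner_eq : ∀ θ : ℝ,
      (∫ θhat in Set.Ico
            ((2 * π / N) * (round (θ * N / (2 * π)) : ℝ) - π / N)
            ((2 * π / N) * (round (θ * N / (2 * π)) : ℝ) + π / N),
          (1 - Real.cos (θhat - θ)) * (N / (2 * π)))
        = 1 - (N / π) * Real.sin (π / N) * F θ := by
    intro θ
    set c : ℝ := (2 * π / N) * (round (θ * N / (2 * π)) : ℝ) with hc
    have hle : c - π / N ≤ c + π / N := by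
      have : 0 < π / N := by positivity
      linarith
    rw [MeasureTheory.setIntegral_congr_set MeasureTheory.Ico_ae_eq_Ioc,
      ← intervalIntegral.integral_of_le hle,
      intervalIntegral.integral_mul_const]
    have hcos : (∫ x in (c - π / N)..(c + π / N), Real.cos (x - θ))
        = Real.sin (c + π / N - θ) - Real.sin (c - π / N - θ) := by
      rw [intervalIntegral.integral_comp_sub_right Real.cos θ, integral_cos]
    have h1 : (∫ x in (c - π / N)..(c + π / N), (1 - Real.cos (x - θ)))
        = ((c + π / N) - (c - π / N)) - (Real.sin (c + π / N - θ) - Real.sin (c - π / N - θ)) := by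
      rw [intervalIntegral.integral_sub intervalIntegrable_const
        ((Continuous.intervalIntegrable (by fun_prop) _ _ : IntervalIntegrable (fun x : ℝ => Real.cos (x - θ)) volume _ _)),
        intervalIntegral.integral_const, hcos]
      simp [smul_eq_mul]
    rw [h1]
    have h2 : Real.sin (c + π / N - θ) - Real.sin (c - π / N - θ)
        = 2 * Real.sin (π / N) * Real.cos (c - θ) := by
      have e1 : c + π / N - θ = (c - θ) + π / N := by ring
      have e2 : c - π / N - θ = (c - θ) - π / N := by ring
      rw [e1, e2]
      simp only [Real.sin_add, Real.sin_sub, Real.cos_sub]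
      ring
    rw [h2]
    have hFθ : F θ = Real.cos (c - θ) := rfl
    rw [hFθ]
    field_simp
    ring
  -- periodicity of F
  have hper : Function.Periodic F (2 * π / N) := by
    intro θ
    have harg : (θ + 2 * π / N) * N / (2 * π) = θ * N / (2 * π) + 1 := by
      field_simp
    simp only [hF, harg, round_add_one]
    push_cast
    ring_nf
  -- measurability and integrability of F
  have hmeas : Measurable F := by
    have h1 : Measurable (fun θ : ℝ => (round (θ * N / (2 * π)) : ℝ)) := by
      simp only [round_eq]
      exact measurable_from_top.comp (Int.measurable_floor.comp
        (((measurable_id.mul_const (N:ℝ)).div_const (2*π)).add_const (1/2)))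
    exact Real.measurable_cos.comp ((measurable_const.mul h1).sub measurable_id)
  have hint : ∀ t₁ t₂ : ℝ, IntervalIntegrable F volume t₁ t₂ := by
    intro t₁ t₂
    rw [intervalIntegrable_iff]
    refine MeasureTheory.Integrable.mono' (g := fun _ => (1:ℝ))
      (integrableOn_const measure_Ioc_lt_top.ne) hmeas.aestronglyMeasurable.restrict ?_
    filter_upwards with x
    simp [hF, Real.abs_cos_le_one]
  -- integral of F over one period
  have hone : (∫ θ in (-(π / N))..(-(π / N) + 2 * π / N), F θ) = 2 * Real.sin (π / N) := by
    have hcong : ∀ θ ∈ Set.Ioo (-(π / N)) (π / N), F θ = Real.cos θ := by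
      intro θ hθ
      have hb1 : θ * N < π := by
        nlinarith [mul_lt_mul_of_pos_right hθ.2 hN0, div_mul_cancel₀ π hNne]
      have hb2 : -π < θ * N := by
        nlinarith [mul_lt_mul_of_pos_right hθ.1 hN0, div_mul_cancel₀ π hNne]
      have hr : round (θ * N / (2 * π)) = 0 := by
        rw [round_eq_zero_iff]
        constructor
        · rw [le_div_iff₀ (by positivity)]
          linarith
        · rw [div_lt_iff₀ (by positivity)]
          linarith
      simp [hF, hr, Real.cos_neg]
    have hle2 : -(π / N) ≤ π / N := by
      have : 0 < π / N := by positivity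
      linarith
    have e : -(π / N) + 2 * π / N = π / N := by ring
    rw [e, intervalIntegral.integral_of_le hle2]
    have h0 : ∀ᵐ x : ℝ, x ≠ π / N := by
      rw [ae_iff]
      simp only [not_not, Set.setOf_eq_eq_singleton]
      exact measure_singleton _
    have hset : (∫ θ in Set.Ioc (-(π / N)) (π / N), F θ)
        = ∫ θ in Set.Ioc (-(π / N)) (π / N), Real.cos θ := by
      apply MeasureTheory.setIntegral_congr_ae measurableSet_Ioc
      filter_upwards [h0] with x hx hmem
      exact hcong x ⟨hmem.1, lt_of_le_of_ne hmem.2 hx⟩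
    rw [hset, ← intervalIntegral.integral_of_le hle2, integral_cos, Real.sin_neg]
    ring
  -- integral of F over [0, 2π)
  have hFint : (∫ θ in Set.Ico (0:ℝ) (2 * π), F θ) = 2 * N * Real.sin (π / N) := by
    have e2 : (2 * π : ℝ) = 0 + (N : ℤ) • (2 * π / N) := by
      simp [zsmul_eq_mul]
      field_simp
    rw [MeasureTheory.setIntegral_congr_set MeasureTheory.Ico_ae_eq_Ioc,
      ← intervalIntegral.integral_of_le (by positivity), e2,
      hper.intervalIntegral_add_zsmul_eq (N : ℤ) 0 hint,
      hper.intervalIntegral_add_eq 0 (-(π / N)), hone, zsmul_eq_mul]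
    push_cast
    ring
  -- outer integral
  have houter : (∫ θ in Set.Ico (0:ℝ) (2 * π),
      (1 - (N / π) * Real.sin (π / N) * F θ) / (2 * π))
      = 1 - (N * Real.sin (π / N) / π) ^ 2 := by
    have hintOn : IntegrableOn F (Set.Ico (0:ℝ) (2 * π)) := by
      refine MeasureTheory.Integrable.mono' (g := fun _ => (1:ℝ))
        (integrableOn_const measure_Ico_lt_top.ne) hmeas.aestronglyMeasurable.restrict ?_
      filter_upwards with x
      simp [hF, Real.abs_cos_le_one]
    have hsplit : ∀ θ : ℝ, (1 - (N / π) * Real.sin (π / N) * F θ) / (2 * π)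
        = 1 / (2 * π) - ((N / π) * Real.sin (π / N) / (2 * π)) * F θ := by
      intro θ; ring
    simp only [hsplit]
    rw [MeasureTheory.integral_sub (integrableOn_const (C := (1 / (2 * π) : ℝ)) measure_Ico_lt_top.ne)
      (hintOn.const_mul _), MeasureTheory.integral_const_mul, hFint,
      MeasureTheory.setIntegral_const, MeasureTheory.measureReal_def, Real.volume_Ico, smul_eq_mul]
    rw [ENNReal.toReal_ofReal (by simp; positivity)]
    rw [div_pow]
    field_simp
    ring
  calc (∫ θ in Set.Ico (0 : ℝ) (2 * π),
        (∫ θhat in Set.Ico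
              ((2 * π / N) * (round (θ * N / (2 * π)) : ℝ) - π / N)
              ((2 * π / N) * (round (θ * N / (2 * π)) : ℝ) + π / N),
            (1 - Real.cos (θhat - θ)) * (N / (2 * π))) / (2 * π))
      = ∫ θ in Set.Ico (0:ℝ) (2 * π),
          (1 - (N / π) * Real.sin (π / N) * F θ) / (2 * π) := by
        apply MeasureTheory.setIntegral_congr_fun measurableSet_Ico
        intro θ _
        simp only
        rw [inner_eq θ]
    _ = 1 - (N * Real.sin (π / N) / π) ^ 2 := houter
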